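/- Decomposition of torus elements: for every d and every growth function F there exists M₀ = M₀(d, F) such that for every θ ∈ 𝕋^d and positive integer N there is M ≤ M₀ and a decomposition θ = θ_smth + θ_rat + θ_irrat where: (1) d(θ_smth, 0) ≤ M/N; (2) qθ_rat = 0 for some positive integer q ≤ M; (3) θ_irrat lies in a subtorus T of 𝕋^d of complexity ≤ M and is (F(M), N)-irrational in T. -/

import Mathlib

open Finset

/-- The quotient Euclidean metric on the torus `𝕋^d = ℝ^d/ℤ^d`. -/
noncomputable def torusDist {d : ℕ} (x y : Fin d → ℝ) : ℝ :=
  ⨅ z : Fin d → ℤ, Real.sqrt (∑ i, (x i - y i - (z i : ℝ)) ^ 2)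

/-- `θ ∈ 𝕋^d` is `(A,N)`-irrational: for every nonzero `m ∈ ℤ^d` with `‖m‖₁ ≤ A`,
the distance of `m·θ` to the nearest integer is at least `A/N`. -/
def IsIrrational1 (d : ℕ) (A N : ℝ) (θ : Fin d → ℝ) : Prop :=
  ∀ m : Fin d → ℤ, m ≠ 0 → (∑ i, |(m i : ℝ)|) ≤ A →
    A / N ≤ |(∑ i, (m i : ℝ) * θ i) - round (∑ i, (m i : ℝ) * θ i)|

/-- A growth function: an increasing function `ℝ⁺ → ℝ⁺`. -/
def Growth (F : ℝ → ℝ) : Prop :=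
  (∀ x y, 0 < x → x ≤ y → F x ≤ F y) ∧ ∀ x, 0 < x → 0 < F x

/-- Decomposition of torus elements: every `θ ∈ 𝕋^d` splits, for some `M ≤ M₀(d,F)`,
as `θ = θ_smth + θ_rat + θ_irrat`, where `θ_smth` is `(M,N)`-smooth, `θ_rat` is
`M`-rational, and `θ_irrat` lies in a subtorus `T = L⁻¹(𝕋^{d'} × {0})` of complexity
at most `M` (given by `L ∈ SL_d(ℤ)` with entries of absolute value at most `M`)
and is `(F(M),N)`-irrational in `T`. -/

lemma bezout_finset {ι : Type*} [DecidableEq ι] (s : Finset ι) (m : ι → ℤ) :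
    ∃ u : ι → ℤ, ∑ i ∈ s, m i * u i = s.gcd m := by
  classical
  induction s using Finset.induction_on with
  | empty => exact ⟨0, by simp⟩
  | @insert a s ha ih =>
    obtain ⟨u', hu'⟩ := ih
    refine ⟨fun i => if i = a then Int.gcdA (m a) (s.gcd m)
      else Int.gcdB (m a) (s.gcd m) * u' i, ?_⟩
    rw [Finset.sum_insert ha, Finset.gcd_insert]
    simp only [eq_self_iff_true, if_true]
    have : ∑ i ∈ s, m i * (if i = a then Int.gcdA (m a) (s.gcd m)
        else Int.gcdB (m a) (s.gcd m) * u' i) = Int.gcdB (m a) (s.gcd m) * ∑ i ∈ s, m i * u' i := by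
      rw [Finset.mul_sum]
      refine Finset.sum_congr rfl fun i hi => ?_
      rw [if_neg (fun h : i = a => ha (h ▸ hi))]; ring
    rw [this, hu', ← Int.coe_gcd, Int.gcd_eq_gcd_ab]
    ring

/-- The dot-product linear functional on `ℤ^n`. -/
def dotL {n : ℕ} (c : Fin n → ℤ) : (Fin n → ℤ) →ₗ[ℤ] ℤ where
  toFun x := ∑ i, c i * x i
  map_add' x y := by simp [mul_add, Finset.sum_add_distrib]
  map_smul' r x := by simp [Finset.mul_sum, mul_left_comm]

set_option maxHeartbeats 1000000 in
lemma row_lemma (n : ℕ) (m : Fin (n+1) → ℤ) (hm : m ≠ 0) :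
    ∃ (q : ℤ) (P Q : Matrix (Fin (n+1)) (Fin (n+1)) ℤ),
      0 < q ∧ P * Q = 1 ∧ Q * P = 1 ∧ ∀ j, m j = q * P 0 j := by
  classical
  set g : ℤ := Finset.gcd Finset.univ m with hg
  have hg0 : g ≠ 0 := by
    intro h
    exact hm (funext fun i => Finset.gcd_eq_zero_iff.1 h i (Finset.mem_univ i))
  have hgpos : 0 < |g| := abs_pos.2 hg0
  have hdvd : ∀ i, |g| ∣ m i := fun i => (abs_dvd _ _).2 (Finset.gcd_dvd (Finset.mem_univ i))
  set m₁ : Fin (n+1) → ℤ := fun i => m i / |g| with hm₁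
  have hmeq : ∀ i, m i = |g| * m₁ i := fun i => (Int.mul_ediv_cancel' (hdvd i)).symm
  -- Bezout: find u with ∑ m₁ i * u i = 1
  obtain ⟨u₀, hu₀⟩ := bezout_finset Finset.univ m
  have hsign : Int.sign g * g = |g| := by
    rcases lt_trichotomy g 0 with h | h | h
    · rw [Int.sign_eq_neg_one_of_neg h, abs_of_neg h]; ring
    · exact absurd h hg0
    · rw [Int.sign_eq_one_of_pos h, abs_of_pos h]; ring
  set u : Fin (n+1) → ℤ := fun i => Int.sign g * u₀ i with hu
  have hkey : ∑ i, m₁ i * u i = 1 := by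
    have h1 : |g| * (∑ i, m₁ i * u i) = |g| * 1 := by
      rw [Finset.mul_sum, mul_one]
      calc ∑ i, |g| * (m₁ i * u i) = ∑ i, Int.sign g * (m i * u₀ i) := by
            refine Finset.sum_congr rfl fun i _ => ?_
            rw [hmeq i]; ring
        _ = Int.sign g * ∑ i, m i * u₀ i := by rw [Finset.mul_sum]
        _ = |g| := by rw [hu₀, ← hg, hsign]
    exact mul_left_cancel₀ (ne_of_gt hgpos) h1
  have hfLu : dotL m₁ u = 1 := hkey
  -- the kernel of `dotL m₁` and a basis of it
  obtain ⟨k, w⟩ := Submodule.basisOfPid (Pi.basisFun ℤ (Fin (n+1))) (LinearMap.ker (dotL m₁))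
  set v : Fin (k+1) → (Fin (n+1) → ℤ) := Fin.cons u (fun i => (w i : Fin (n+1) → ℤ)) with hv
  have hwK : ∀ i, ((w i : Fin (n+1) → ℤ)) ∈ LinearMap.ker (dotL m₁) := fun i => (w i).2
  have hspanK : Submodule.span ℤ (Set.range (fun i => (w i : Fin (n+1) → ℤ)))
      = LinearMap.ker (dotL m₁) := by
    have : Set.range (fun i => (w i : Fin (n+1) → ℤ))
        = (LinearMap.ker (dotL m₁)).subtype '' Set.range w := by
      rw [← Set.range_comp]; rfl
    rw [this, ← Submodule.map_span, w.span_eq, Submodule.map_top,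
      Submodule.range_subtype]
  have hli : LinearIndependent ℤ v := by
    refine LinearIndependent.fin_cons' u _ ?_ ?_
    · exact w.linearIndependent.map' _ (Submodule.ker_subtype _)
    · intro c y h2' hcy
      have hy : (y : Fin (n+1) → ℤ) ∈ LinearMap.ker (dotL m₁) := by
        have h2 := h2'
        exact hspanK.le h2
      have := congrArg (dotL m₁) hcy
      rw [map_add, map_smul, LinearMap.mem_ker.1 hy, map_zero] at this
      simpa [hfLu] using this
  have hsp : ⊤ ≤ Submodule.span ℤ (Set.range v) := by
    intro x _
    have hxdec : x = (dotL m₁ x) • u + (x - (dotL m₁ x) • u) := by ring_nf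
    have hker : x - (dotL m₁ x) • u ∈ LinearMap.ker (dotL m₁) := by
      rw [LinearMap.mem_ker, map_sub, map_smul, hfLu]
      simp
    have hrange : Set.range (fun i => (w i : Fin (n+1) → ℤ)) ⊆ Set.range v := by
      rintro _ ⟨i, rfl⟩
      exact ⟨i.succ, by simp [hv]⟩
    have h2 : x - (dotL m₁ x) • u ∈ Submodule.span ℤ (Set.range v) := by
      have := hker
      rw [← hspanK] at this
      exact Submodule.span_mono hrange this
    have h1 : (dotL m₁ x) • u ∈ Submodule.span ℤ (Set.range v) :=
      Submodule.smul_mem _ _ (Submodule.subset_span ⟨0, by simp [hv]⟩)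
    have := Submodule.add_mem _ h1 h2
    rwa [← hxdec] at this
  set b0 : Module.Basis (Fin (k+1)) ℤ (Fin (n+1) → ℤ) := Module.Basis.mk hli hsp with hb0
  have hk : k + 1 = n + 1 := by
    have h1 := Module.finrank_eq_card_basis b0
    have h2 := Module.finrank_eq_card_basis (Pi.basisFun ℤ (Fin (n+1)))
    simp only [Fintype.card_fin] at h1 h2
    omega
  set b : Module.Basis (Fin (n+1)) ℤ (Fin (n+1) → ℤ) := b0.reindex (finCongr hk) with hb
  refine ⟨|g|, b.toMatrix ⇑(Pi.basisFun ℤ (Fin (n+1))),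
    (Pi.basisFun ℤ (Fin (n+1))).toMatrix ⇑b, hgpos,
    Module.Basis.toMatrix_mul_toMatrix_flip _ _, Module.Basis.toMatrix_mul_toMatrix_flip _ _, ?_⟩
  intro j
  have hrepr0 : ∀ x : Fin (n+1) → ℤ, b0.repr x 0 = dotL m₁ x := by
    have hext : (Finsupp.lapply (0 : Fin (k+1))).comp (b0.repr : (Fin (n+1) → ℤ) →ₗ[ℤ] _)
        = dotL m₁ := by
      refine Module.Basis.ext b0 fun i => ?_
      induction i using Fin.cases with
      | zero =>
        have hb00 : b0 0 = u := by rw [hb0, Module.Basis.mk_apply, hv, Fin.cons_zero]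
        rw [LinearMap.comp_apply, LinearEquiv.coe_coe, Module.Basis.repr_self,
          Finsupp.lapply_apply, Finsupp.single_eq_same, hb00, hfLu]
      | succ i =>
        have hb0s : b0 i.succ = (w i : Fin (n+1) → ℤ) := by
          rw [hb0, Module.Basis.mk_apply, hv, Fin.cons_succ]
        rw [LinearMap.comp_apply, LinearEquiv.coe_coe, Module.Basis.repr_self,
          Finsupp.lapply_apply, Finsupp.single_apply, if_neg (Fin.succ_ne_zero i), hb0s]
        exact (LinearMap.mem_ker.1 (hwK i)).symm
    intro x
    have hx := LinearMap.congr_fun hext x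
    simpa using hx
  have hP0 : b.toMatrix ⇑(Pi.basisFun ℤ (Fin (n+1))) 0 j = m₁ j := by
    rw [Module.Basis.toMatrix_apply, hb, Module.Basis.repr_reindex_apply]
    have h0 : (finCongr hk).symm 0 = 0 := by
      ext; simp
    rw [h0, hrepr0]
    simp [dotL, Pi.single_apply, mul_ite]
  rw [hmeq j, hP0]

lemma bounded_row (n : ℕ) (B : ℤ) :
    ∃ C : ℝ, 1 ≤ C ∧ ∀ m : Fin (n+1) → ℤ, m ≠ 0 → (∀ i, |m i| ≤ B) →
      ∃ (q : ℤ) (P Q : Matrix (Fin (n+1)) (Fin (n+1)) ℤ),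
        0 < q ∧ P * Q = 1 ∧ Q * P = 1 ∧ (∀ j, m j = q * P 0 j) ∧
        ∀ i j, (|P i j| : ℝ) ≤ C ∧ (|Q i j| : ℝ) ≤ C := by
  classical
  have hchoice : ∀ m : Fin (n+1) → ℤ, ∃ c : ℕ, m ≠ 0 →
      ∃ (q : ℤ) (P Q : Matrix (Fin (n+1)) (Fin (n+1)) ℤ),
        0 < q ∧ P * Q = 1 ∧ Q * P = 1 ∧ (∀ j, m j = q * P 0 j) ∧
        ∀ i j, (P i j).natAbs ≤ c ∧ (Q i j).natAbs ≤ c := by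
    intro m
    by_cases h : m = 0
    · exact ⟨0, fun h' => absurd h h'⟩
    · obtain ⟨q, P, Q, h1, h2, h3, h4⟩ := row_lemma n m h
      refine ⟨Finset.sup Finset.univ
        (fun p : Fin (n+1) × Fin (n+1) => max (P p.1 p.2).natAbs (Q p.1 p.2).natAbs),
        fun _ => ⟨q, P, Q, h1, h2, h3, h4, fun i j => ?_⟩⟩
      have hij := Finset.le_sup (f := fun p : Fin (n+1) × Fin (n+1) =>
        max (P p.1 p.2).natAbs (Q p.1 p.2).natAbs) (Finset.mem_univ (i, j))
      exact ⟨le_trans (le_max_left _ _) hij, le_trans (le_max_right _ _) hij⟩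
  choose cfun hcfun using hchoice
  set S : Finset (Fin (n+1) → ℤ) := Finset.Icc (fun _ => -B) (fun _ => B) with hS
  refine ⟨(S.sup cfun : ℕ) + 1, by have : (0:ℝ) ≤ ((S.sup cfun : ℕ) : ℝ) := Nat.cast_nonneg _; linarith, fun m hm hmB => ?_⟩
  have hmS : m ∈ S := by
    rw [hS, Finset.mem_Icc]
    constructor <;> intro i
    · exact neg_le_of_abs_le (hmB i)
    · exact le_of_abs_le (hmB i)
  have hc : cfun m ≤ S.sup cfun := Finset.le_sup hmS
  obtain ⟨q, P, Q, h1, h2, h3, h4, h5⟩ := hcfun m hm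
  refine ⟨q, P, Q, h1, h2, h3, h4, fun i j => ?_⟩
  have hb : ∀ a : ℤ, a.natAbs ≤ cfun m → (|a| : ℝ) ≤ (S.sup cfun : ℕ) + 1 := by
    intro a ha
    have hh1 : |a| ≤ (cfun m : ℤ) := by
      rw [Int.abs_eq_natAbs]; exact_mod_cast ha
    have hh2 : (cfun m : ℤ) ≤ ((S.sup cfun : ℕ) : ℤ) := by exact_mod_cast hc
    have hh3 : ((|a| : ℤ) : ℝ) ≤ ((S.sup cfun : ℕ) : ℝ) := by
      exact_mod_cast le_trans hh1 hh2
    rw [Int.cast_abs] at hh3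
    linarith
  exact ⟨hb _ (h5 i j).1, hb _ (h5 i j).2⟩

lemma torusDist_le {d : ℕ} (x : Fin d → ℝ) (z : Fin d → ℤ) :
    torusDist x 0 ≤ Real.sqrt (∑ i, (x i - (z i : ℝ)) ^ 2) := by
  have hb : BddBelow (Set.range fun z : Fin d → ℤ =>
      Real.sqrt (∑ i, (x i - (0 : Fin d → ℝ) i - (z i : ℝ)) ^ 2)) := by
    refine ⟨0, ?_⟩
    rintro y ⟨z, rfl⟩
    exact Real.sqrt_nonneg _
  have := ciInf_le hb z
  simpa [torusDist] using this

lemma abs_le_sqrt_sum {d : ℕ} (t : Fin d → ℝ) (i : Fin d) :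
    |t i| ≤ Real.sqrt (∑ j, t j ^ 2) := by
  rw [← Real.sqrt_sq_eq_abs]
  apply Real.sqrt_le_sqrt
  exact Finset.single_le_sum (fun j _ => sq_nonneg (t j)) (Finset.mem_univ i)

lemma sqrt_sum_le {d : ℕ} (t : Fin d → ℝ) (K : ℝ) (hK : 0 ≤ K)
    (h : ∀ i, |t i| ≤ K) : Real.sqrt (∑ i, t i ^ 2) ≤ d * K := by
  have h1 : ∑ i, t i ^ 2 ≤ (d : ℝ) ^ 2 * K ^ 2 := by
    calc ∑ i, t i ^ 2 ≤ ∑ _i : Fin d, K ^ 2 := by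
          refine Finset.sum_le_sum fun i _ => ?_
          rw [← sq_abs]
          exact pow_le_pow_left₀ (abs_nonneg _) (h i) 2
      _ = (d : ℝ) * K ^ 2 := by simp [Finset.sum_const, Finset.card_univ]
      _ ≤ (d : ℝ) ^ 2 * K ^ 2 := by
          have hd2 : (d : ℝ) ≤ (d : ℝ) ^ 2 := by
            have h0 : (0:ℝ) ≤ (d:ℝ) := Nat.cast_nonneg d
            have h1 : ((d:ℝ) - 1) * (d:ℝ) ≥ 0 := by
              rcases Nat.eq_zero_or_pos d with h | h
              · simp [h]
              · have : (1:ℝ) ≤ (d:ℝ) := by exact_mod_cast h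
                nlinarith
            nlinarith
          nlinarith [sq_nonneg K]
  calc Real.sqrt (∑ i, t i ^ 2) ≤ Real.sqrt ((d : ℝ) ^ 2 * K ^ 2) := Real.sqrt_le_sqrt h1
    _ = d * K := by
        rw [← mul_pow, Real.sqrt_sq (by positivity)]

/-- `∑ l Q j l (∑ k P l k x k) = x j` when `Q * P = 1`. -/
lemma inv_sum_eq {n : ℕ} (P Q : Matrix (Fin n) (Fin n) ℤ) (hQP : Q * P = 1)
    (x : Fin n → ℝ) (j : Fin n) :
    ∑ l, (Q j l : ℝ) * (∑ k, (P l k : ℝ) * x k) = x j := by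
  have h : ∀ l, (Q j l : ℝ) * (∑ k, (P l k : ℝ) * x k)
      = ∑ k, ((Q j l * P l k : ℤ) : ℝ) * x k := by
    intro l
    rw [Finset.mul_sum]
    exact Finset.sum_congr rfl fun k _ => by push_cast; ring
  rw [Finset.sum_congr rfl fun l _ => h l, Finset.sum_comm]
  have h2 : ∀ k, ∑ l, ((Q j l * P l k : ℤ) : ℝ) * x k
      = (((Q * P) j k : ℤ) : ℝ) * x k := by
    intro k
    rw [← Finset.sum_mul, Matrix.mul_apply]
    push_cast
    ring
  rw [Finset.sum_congr rfl fun k _ => h2 k, hQP]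
  have : ∀ k, (((1 : Matrix (Fin n) (Fin n) ℤ) j k : ℤ) : ℝ) * x k
      = (if j = k then (1:ℝ) else 0) * x k := by
    intro k
    rw [Matrix.one_apply]
    split <;> simp
  rw [Finset.sum_congr rfl fun k _ => this k]
  simp

def TorusClaim (d : ℕ) : Prop :=
  ∀ F : ℝ → ℝ, Growth F → ∃ M₀ : ℝ, ∀ (θ : Fin d → ℝ) (N : ℕ), 0 < N →
    ∃ (M : ℝ) (θs θr θi : Fin d → ℝ), 0 < M ∧ M ≤ M₀ ∧
      (∀ i, θ i = θs i + θr i + θi i) ∧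
      torusDist θs 0 ≤ M / N ∧
      (∃ q : ℕ, 0 < q ∧ (q : ℝ) ≤ M ∧ ∀ i, ∃ k : ℤ, (q : ℝ) * θr i = k) ∧
      (∃ (d' : ℕ) (hd' : d' ≤ d) (L : Matrix (Fin d) (Fin d) ℤ),
        L.det = 1 ∧ (∀ i j, (|L i j| : ℝ) ≤ M) ∧
        (∀ i : Fin d, d' ≤ (i : ℕ) → ∃ k : ℤ, (∑ j, (L i j : ℝ) * θi j) = k) ∧
        IsIrrational1 d' (F M) N
          (fun i' : Fin d' => ∑ j, (L (Fin.castLE hd' i') j : ℝ) * θi j))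

lemma torusClaim_zero : TorusClaim 0 := by
  intro F hF
  refine ⟨1, fun θ N hN => ⟨1, θ, 0, 0, one_pos, le_refl _, by intro i; exact absurd i.2 (by omega),
    ?_, ⟨1, one_pos, by norm_num, fun i => absurd i.2 (by omega)⟩,
    ⟨0, le_refl _, 1, Matrix.det_one, fun i j => absurd i.2 (by omega),
      fun i _ => absurd i.2 (by omega), fun m hm _ => absurd (Subsingleton.elim m 0) hm⟩⟩⟩
  have := torusDist_le θ 0
  simp at this
  calc torusDist θ 0 ≤ 0 := by simpa using torusDist_le θ 0
    _ ≤ 1 / N := by positivity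

set_option maxHeartbeats 2000000 in
lemma torusClaim_succ (d : ℕ) (ih : TorusClaim d) : TorusClaim (d+1) := by
  intro F hF
  classical
  have hF1 : 0 < F 1 := hF.2 1 one_pos
  obtain ⟨C, hC1, hC⟩ := bounded_row d ⌈F 1⌉
  have hC0 : (0:ℝ) < C := lt_of_lt_of_le one_pos hC1
  set c : ℝ := ((d:ℝ)+2) * C * (F 1 + 2*d + 1) + F 1 + 1 with hc
  have hd0 : (0:ℝ) ≤ (d:ℝ) := Nat.cast_nonneg d
  have hcpos : 0 < c := by
    have : 0 < ((d:ℝ)+2) * C * (F 1 + 2*d + 1) := by positivity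
    nlinarith
  have hc1 : 1 ≤ c := by
    have : 0 < ((d:ℝ)+2) * C * (F 1 + 2*d + 1) := by positivity
    nlinarith
  set F₂ : ℝ → ℝ := fun x => F (c * x) with hF₂def
  have hF₂ : Growth F₂ := by
    constructor
    · intro x y hx hxy
      exact hF.1 _ _ (by positivity) (by nlinarith)
    · intro x hx
      exact hF.2 _ (by positivity)
  obtain ⟨M₀', hIH⟩ := ih F₂ hF₂
  refine ⟨max 1 (c * M₀'), fun θ N hN => ?_⟩
  have hNR : (0:ℝ) < N := by exact_mod_cast hN
  by_cases hirr : IsIrrational1 (d+1) (F 1) N θ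
  · -- θ is itself irrational enough
    refine ⟨1, 0, 0, θ, one_pos, le_max_left _ _, by intro i; simp, ?_,
      ⟨1, one_pos, by norm_num, fun i => ⟨0, by simp⟩⟩,
      ⟨d+1, le_refl _, 1, Matrix.det_one, ?_, ?_, ?_⟩⟩
    · calc torusDist (0 : Fin (d+1) → ℝ) 0
          ≤ Real.sqrt (∑ i : Fin (d+1), ((0:Fin (d+1) → ℝ) i - ((0 : Fin (d+1) → ℤ) i : ℝ))^2) :=
            torusDist_le 0 0
        _ = 0 := by simp
        _ ≤ 1 / N := by positivity
    · intro i j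
      rw [Matrix.one_apply]
      split <;> simp
    · intro i hi
      exact absurd i.2 (by omega)
    · have hfun : (fun i' : Fin (d+1) =>
          ∑ j, ((1 : Matrix (Fin (d+1)) (Fin (d+1)) ℤ) (Fin.castLE (le_refl (d+1)) i') j : ℝ) * θ j)
          = θ := by
        funext i'
        have h1 : Fin.castLE (le_refl (d+1)) i' = i' := rfl
        rw [h1]
        calc ∑ j, ((1 : Matrix (Fin (d+1)) (Fin (d+1)) ℤ) i' j : ℝ) * θ j
            = ∑ j, (if i' = j then (1:ℝ) else 0) * θ j := by
              refine Finset.sum_congr rfl fun j _ => ?_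
              rw [Matrix.one_apply]
              split <;> simp
          _ = θ i' := by simp
      rw [hfun]
      exact hirr
  · -- the main branch
    rw [IsIrrational1] at hirr
    push_neg at hirr
    obtain ⟨m, hm0, hmA, hmbad⟩ := hirr
    have habs_le : ∀ i, (|m i| : ℝ) ≤ F 1 := by
      intro i
      have h1 : |(m i : ℝ)| ≤ ∑ j, |(m j : ℝ)| :=
        Finset.single_le_sum (f := fun j => |(m j : ℝ)|) (fun j _ => abs_nonneg _)
          (Finset.mem_univ i)
      exact le_trans h1 hmA
    have hment : ∀ i, |m i| ≤ ⌈F 1⌉ := by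
      intro i
      have := le_trans (habs_le i) (Int.le_ceil (F 1))
      exact_mod_cast this
    obtain ⟨q, P, Q, hq, hPQ, hQP, hrow, hbnd⟩ := hC m hm0 hment
    have hqR : (1:ℝ) ≤ (q:ℝ) := by exact_mod_cast hq
    have hq0R : (q:ℝ) ≠ 0 := by linarith
    set φ : Fin (d+1) → ℝ := fun k => ∑ j, (P k j : ℝ) * θ j with hφ
    set ψ : Fin d → ℝ := fun i => φ i.succ with hψ
    obtain ⟨M', ψs, ψr, ψi, hM'0, hM'le, hsum', hdist', hrat', hsub'⟩ := hIH ψ N hN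
    obtain ⟨q', hq'0, hq'le, hq'rat⟩ := hrat'
    obtain ⟨d'', hd'', L', hdet', hent', hint', hirr'⟩ := hsub'
    have hM'1 : (1:ℝ) ≤ M' := le_trans (by exact_mod_cast hq'0) hq'le
    -- the first coordinate: m·θ = q·φ 0
    have hmθ : ∑ j, (m j : ℝ) * θ j = (q:ℝ) * φ 0 := by
      rw [hφ]
      rw [Finset.mul_sum]
      refine Finset.sum_congr rfl fun j _ => ?_
      rw [hrow j]
      push_cast
      ring
    set r : ℤ := round (∑ j, (m j:ℝ) * θ j) with hr
    set β : ℝ := (∑ j, (m j:ℝ) * θ j - (r:ℝ))/(q:ℝ) with hβ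
    have hβabs : |β| ≤ F 1 / N := by
      rw [hβ, abs_div, abs_of_pos (by linarith : (0:ℝ) < (q:ℝ))]
      calc |∑ j, (m j:ℝ) * θ j - (r:ℝ)| / (q:ℝ)
          ≤ |∑ j, (m j:ℝ) * θ j - (r:ℝ)| := div_le_self (abs_nonneg _) hqR
        _ ≤ F 1 / N := le_of_lt hmbad
    have hφ0 : φ 0 = (r:ℝ)/(q:ℝ) + β := by
      have h1 : φ 0 = (∑ j, (m j:ℝ) * θ j) / (q:ℝ) := by
        rw [hmθ]
        field_simp
      rw [h1, hβ]
      field_simp; ring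
    set φs : Fin (d+1) → ℝ := Fin.cons β ψs with hφs
    set φr : Fin (d+1) → ℝ := Fin.cons ((r:ℝ)/(q:ℝ)) ψr with hφr
    set φi : Fin (d+1) → ℝ := Fin.cons 0 ψi with hφi
    set θs : Fin (d+1) → ℝ := fun j => ∑ l, (Q j l : ℝ) * φs l with hθs
    set θr : Fin (d+1) → ℝ := fun j => ∑ l, (Q j l : ℝ) * φr l with hθr
    set θi : Fin (d+1) → ℝ := fun j => ∑ l, (Q j l : ℝ) * φi l with hθi
    set M : ℝ := c * M' with hM
    have hMpos : 0 < M := by positivity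
    have hMle : M ≤ max 1 (c * M₀') := by
      refine le_trans ?_ (le_max_right _ _)
      rw [hM]
      nlinarith
    have hqle : (q:ℝ) ≤ F 1 := by
      obtain ⟨j, hj⟩ := Function.ne_iff.1 hm0
      have hPj : P 0 j ≠ 0 := by
        intro h
        apply hj
        rw [hrow j, h, mul_zero]
        rfl
      have h1 : (1:ℤ) ≤ |P 0 j| := by
        rcases lt_trichotomy (P 0 j) 0 with h | h | h
        · rw [abs_of_neg h]; omega
        · exact absurd h hPj
        · rw [abs_of_pos h]; omega
      have h2 : (q:ℤ) ≤ |m j| := by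
        rw [hrow j, abs_mul, abs_of_pos hq]
        nlinarith
      have h3 : ((q:ℤ):ℝ) ≤ (|m j| : ℝ) := by exact_mod_cast h2
      exact le_trans h3 (habs_le j)
    refine ⟨M, θs, θr, θi, hMpos, hMle, ?_, ?_, ?_, ?_⟩
    · -- decomposition sum
      intro j
      have hφsum : ∀ l, φs l + φr l + φi l = φ l := by
        intro l
        induction l using Fin.cases with
        | zero =>
          rw [hφs, hφr, hφi, Fin.cons_zero, Fin.cons_zero, Fin.cons_zero, hφ0]
          ring
        | succ i =>
          rw [hφs, hφr, hφi, Fin.cons_succ, Fin.cons_succ, Fin.cons_succ]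
          exact (hsum' i).symm
      have h1 : θs j + θr j + θi j = ∑ l, (Q j l : ℝ) * (φs l + φr l + φi l) := by
        rw [hθs, hθr, hθi, ← Finset.sum_add_distrib, ← Finset.sum_add_distrib]
        exact Finset.sum_congr rfl fun l _ => by ring
      rw [h1, Finset.sum_congr rfl fun l _ => by rw [hφsum l]]
      exact (inv_sum_eq P Q hQP θ j).symm
    · -- smooth part
      have h2M : torusDist ψs 0 < 2*M'/N := by
        have h0 : 0 < M'/N := by positivity
        have : M'/N < 2*M'/N := by
          rw [mul_div_assoc]
          linarith
        linarith [hdist']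
      rw [torusDist] at h2M
      obtain ⟨z, hz⟩ := exists_lt_of_ciInf_lt h2M
      simp only [Pi.zero_apply, sub_zero] at hz
      have hco : ∀ i, |ψs i - (z i:ℝ)| ≤ 2*M'/N := by
        intro i
        exact le_trans (abs_le_sqrt_sum (fun i => ψs i - (z i:ℝ)) i) (le_of_lt hz)
      set w : Fin (d+1) → ℤ := fun j => ∑ i, Q j i.succ * z i with hw
      have hK0 : (0:ℝ) ≤ C * (F 1 + 2*d*M') / N := by positivity
      have hco2 : ∀ j, |θs j - (w j : ℝ)| ≤ C * (F 1 + 2*d*M') / N := by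
        intro j
        have hcons0 : φs 0 = β := by rw [hφs]; exact Fin.cons_zero _ _
        have hconss : ∀ i : Fin d, φs i.succ = ψs i := by
          intro i; rw [hφs]; exact Fin.cons_succ _ _ _
        have hsplit : θs j - (w j : ℝ)
            = (Q j 0 : ℝ) * β + ∑ i, (Q j i.succ : ℝ) * (ψs i - (z i:ℝ)) := by
          have e1 : θs j = (Q j 0 : ℝ) * β + ∑ i, (Q j i.succ : ℝ) * ψs i := by
            have e1s : ∑ i : Fin d, (Q j i.succ : ℝ) * φs i.succ
                = ∑ i : Fin d, (Q j i.succ : ℝ) * ψs i :=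
              Finset.sum_congr rfl fun i _ => by rw [hconss i]
            simp only [hθs]
            rw [Fin.sum_univ_succ, hcons0, e1s]
          have e2 : ((w j : ℤ) : ℝ) = ∑ i, (Q j i.succ : ℝ) * (z i : ℝ) := by
            simp only [hw]
            push_cast
            rfl
          have e3 : ∑ i, (Q j i.succ : ℝ) * (ψs i - (z i:ℝ))
              = ∑ i, ((Q j i.succ : ℝ) * ψs i - (Q j i.succ : ℝ) * (z i:ℝ)) :=
            Finset.sum_congr rfl fun i _ => by ring
          rw [e1, e2, e3, Finset.sum_sub_distrib]
          ring
        rw [hsplit]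
        calc |(Q j 0 : ℝ) * β + ∑ i, (Q j i.succ : ℝ) * (ψs i - (z i:ℝ))|
            ≤ |(Q j 0 : ℝ) * β| + |∑ i, (Q j i.succ : ℝ) * (ψs i - (z i:ℝ))| := abs_add_le _ _
          _ ≤ C * (F 1/N) + ∑ i, |(Q j i.succ : ℝ)| * |ψs i - (z i:ℝ)| := by
              refine add_le_add ?_ ?_
              · rw [abs_mul]
                have := (hbnd j 0).2
                exact mul_le_mul this hβabs (abs_nonneg _) (by linarith)
              · refine le_trans (Finset.abs_sum_le_sum_abs _ _) ?_
                exact Finset.sum_le_sum fun i _ => le_of_eq (abs_mul _ _)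
          _ ≤ C * (F 1/N) + ∑ _i : Fin d, C * (2*M'/N) := by
              refine add_le_add (le_refl _) (Finset.sum_le_sum fun i _ => ?_)
              exact mul_le_mul ((hbnd j i.succ).2) (hco i) (abs_nonneg _) (by linarith)
          _ = C * (F 1/N) + d * (C * (2*M'/N)) := by
              rw [Finset.sum_const, Finset.card_univ]
              simp
          _ = C * (F 1 + 2*d*M') / N := by field_simp
      calc torusDist θs 0 ≤ Real.sqrt (∑ j, (θs j - (w j : ℝ))^2) := torusDist_le θs w
        _ ≤ (d+1 : ℕ) * (C * (F 1 + 2*d*M') / N) :=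
            sqrt_sum_le (fun j => θs j - (w j:ℝ)) _ hK0 hco2
        _ ≤ M / N := by
            rw [hM]
            push_cast
            have hstep1 : F 1 + 2*d*M' ≤ (F 1 + 2*d) * M' := by nlinarith
            have h3 : ((d:ℝ)+1) * (C * (F 1 + 2*d*M')) ≤ c * M' := by
              have e1 : ((d:ℝ)+1) * (C * (F 1 + 2*d*M'))
                  ≤ ((d:ℝ)+1) * (C * ((F 1 + 2*d)*M')) := by
                apply mul_le_mul_of_nonneg_left _ (by linarith)
                exact mul_le_mul_of_nonneg_left hstep1 hC0.le
              have e3 : (((d:ℝ)+1) * C * (F 1 + 2*d)) ≤ c := by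
                rw [hc]
                nlinarith [mul_nonneg hC0.le hF1.le, mul_nonneg hC0.le hd0,
                  mul_nonneg (mul_nonneg hd0 hC0.le) hF1.le,
                  mul_nonneg (mul_nonneg hd0 hC0.le) hd0, hC0.le, hF1.le, hd0]
              calc ((d:ℝ)+1) * (C * (F 1 + 2*d*M'))
                  ≤ ((d:ℝ)+1) * (C * ((F 1 + 2*d)*M')) := e1
                _ = (((d:ℝ)+1) * C * (F 1 + 2*d)) * M' := by ring
                _ ≤ c * M' := mul_le_mul_of_nonneg_right e3 (by linarith)
            calc ((d:ℝ)+1) * (C * (F 1 + 2*d*M') / N)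
                = ((d:ℝ)+1) * (C * (F 1 + 2*d*M')) / N := by ring
              _ ≤ c * M' / N := by gcongr
    · -- rational part
      have hqt : ((q.toNat : ℕ) : ℝ) = (q : ℝ) := by
        have h := Int.toNat_of_nonneg hq.le
        exact_mod_cast congrArg (Int.cast (R := ℝ)) h
      have hqtpos : 0 < q.toNat := by omega
      refine ⟨q.toNat * q', Nat.mul_pos hqtpos hq'0, ?_, ?_⟩
      · push_cast
        rw [hqt]
        calc (q:ℝ) * (q' : ℝ) ≤ F 1 * M' := by
              have h1 : (0:ℝ) ≤ (q':ℝ) := Nat.cast_nonneg q'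
              apply mul_le_mul hqle hq'le h1 (le_of_lt hF1)
          _ ≤ M := by
              have hcF : F 1 ≤ c := by
                rw [hc]
                nlinarith [mul_nonneg (mul_nonneg (by linarith : (0:ℝ) ≤ (d:ℝ)+2) hC0.le)
                  (by nlinarith : (0:ℝ) ≤ F 1 + 2*(d:ℝ)+1)]
              rw [hM]
              exact mul_le_mul_of_nonneg_right hcF (by linarith)
      · intro j
        choose kk hkk using hq'rat
        refine ⟨(q':ℤ) * r * Q j 0 + q * ∑ i, Q j i.succ * kk i, ?_⟩
        have hexp : ((q.toNat * q' : ℕ) : ℝ) * θr j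
            = (q:ℝ) * (q':ℝ) * ((Q j 0 : ℝ) * ((r:ℝ)/(q:ℝ))
              + ∑ i, (Q j i.succ : ℝ) * ψr i) := by
          have hcons0 : φr 0 = (r:ℝ)/(q:ℝ) := by rw [hφr]; exact Fin.cons_zero _ _
          have hconss : ∀ i : Fin d, φr i.succ = ψr i := by
            intro i; rw [hφr]; exact Fin.cons_succ _ _ _
          have e1 : θr j = (Q j 0 : ℝ) * ((r:ℝ)/(q:ℝ)) + ∑ i, (Q j i.succ : ℝ) * ψr i := by
            have e1s : ∑ i : Fin d, (Q j i.succ : ℝ) * φr i.succ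
                = ∑ i : Fin d, (Q j i.succ : ℝ) * ψr i :=
              Finset.sum_congr rfl fun i _ => by rw [hconss i]
            simp only [hθr]
            rw [Fin.sum_univ_succ, hcons0, e1s]
          rw [e1]
          push_cast
          rw [hqt]
          try ring
        rw [hexp]
        have hsum2 : (q:ℝ) * (q':ℝ) * ((Q j 0 : ℝ) * ((r:ℝ)/(q:ℝ))
              + ∑ i, (Q j i.succ : ℝ) * ψr i)
            = (q':ℝ) * (r:ℝ) * (Q j 0 : ℝ)
              + (q:ℝ) * ∑ i, (Q j i.succ : ℝ) * ((q':ℝ) * ψr i) := by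
          have hS : ∑ i, (Q j i.succ : ℝ) * ((q':ℝ) * ψr i)
              = (q':ℝ) * ∑ i, (Q j i.succ:ℝ) * ψr i := by
            rw [Finset.mul_sum]
            exact Finset.sum_congr rfl fun i _ => by ring
          rw [hS]
          field_simp
        rw [hsum2, Finset.sum_congr rfl fun i _ => by rw [hkk i]]
        push_cast
        ring
    · -- the subtorus
      have hdet1 : P.det = 1 ∨ P.det = -1 := by
        have : IsUnit P.det := IsUnit.of_mul_eq_one Q.det
          (by rw [← Matrix.det_mul, hPQ, Matrix.det_one])
        exact Int.isUnit_iff.1 this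
      set s : ℤ := P.det * (-1)^d with hs
      have hsabs : |s| = 1 := by
        rw [hs, abs_mul, abs_pow, abs_neg, abs_one, one_pow, mul_one]
        rcases hdet1 with h | h <;> rw [h] <;> norm_num
      set E : Matrix (Fin (d+1)) (Fin (d+1)) ℤ :=
        Matrix.of (Fin.lastCases (motive := fun _ => Fin (d+1) → ℤ)
          (Fin.cons s 0) (fun k : Fin d => Fin.cons 0 (L' k))) with hE
      have hElast0 : E (Fin.last d) 0 = s := by
        rw [hE, Matrix.of_apply, Fin.lastCases_last, Fin.cons_zero]
      have hElastS : ∀ t : Fin d, E (Fin.last d) t.succ = 0 := by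
        intro t
        rw [hE, Matrix.of_apply, Fin.lastCases_last, Fin.cons_succ]
        rfl
      have hEcast0 : ∀ k : Fin d, E (Fin.castSucc k) 0 = 0 := by
        intro k
        rw [hE, Matrix.of_apply, Fin.lastCases_castSucc, Fin.cons_zero]
      have hEcastS : ∀ (k : Fin d) (t : Fin d), E (Fin.castSucc k) t.succ = L' k t := by
        intro k t
        rw [hE, Matrix.of_apply, Fin.lastCases_castSucc, Fin.cons_succ]
      have hφi0 : φi 0 = 0 := by rw [hφi]; exact Fin.cons_zero _ _
      have hφiS : ∀ t : Fin d, φi t.succ = ψi t := by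
        intro t; rw [hφi]; exact Fin.cons_succ _ _ _
      have hdetE : E.det = P.det := by
        rw [Matrix.det_succ_column_zero]
        rw [Finset.sum_eq_single (Fin.last d)]
        · have h2 : E.submatrix (Fin.last d).succAbove Fin.succ = L' := by
            ext k j
            rw [Matrix.submatrix_apply, Fin.succAbove_last, hEcastS k j]
          rw [hElast0, h2, hdet', hs, Fin.val_last, mul_one]
          rw [show ((-1:ℤ))^d * (P.det * (-1)^d) = P.det * ((-1)^d * (-1)^d) by ring]
          rw [← pow_add, Even.neg_one_pow ⟨d, rfl⟩, mul_one]
        · intro i _ hi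
          obtain ⟨k, rfl⟩ := Fin.exists_castSucc_eq.2 hi
          rw [hEcast0 k]
          ring
        · intro h
          exact absurd (Finset.mem_univ _) h
      have hEent : ∀ i l, (|E i l| : ℝ) ≤ M' := by
        intro i l
        induction i using Fin.lastCases with
        | last =>
          induction l using Fin.cases with
          | zero =>
            rw [hElast0]
            have habs1 : ((|s|:ℤ):ℝ) = 1 := by rw [hsabs]; norm_num
            rw [Int.cast_abs] at habs1
            rw [habs1]
            linarith
          | succ t =>
            rw [hElastS t]
            simp only [Int.cast_zero, abs_zero]
            linarith
        | cast k =>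
          induction l using Fin.cases with
          | zero =>
            rw [hEcast0 k]
            simp only [Int.cast_zero, abs_zero]
            linarith
          | succ t =>
            rw [hEcastS k t]
            exact hent' k t
      have hPθi : ∀ l, ∑ k, (P l k : ℝ) * θi k = φi l := by
        intro l
        have h := inv_sum_eq Q P hPQ φi l
        rw [← h]
      have hLrow : ∀ k : Fin (d+1), ∑ j, (((E * P) k j : ℤ) : ℝ) * θi j
          = ∑ l, (E k l : ℝ) * φi l := by
        intro k
        calc ∑ j, (((E * P) k j : ℤ) : ℝ) * θi j
            = ∑ j, (∑ l, (E k l : ℝ) * (P l j : ℝ)) * θi j := by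
              refine Finset.sum_congr rfl fun j _ => ?_
              rw [Matrix.mul_apply]
              push_cast
              ring
          _ = ∑ j, ∑ l, (E k l : ℝ) * ((P l j : ℝ) * θi j) := by
              refine Finset.sum_congr rfl fun j _ => ?_
              rw [Finset.sum_mul]
              exact Finset.sum_congr rfl fun l _ => by ring
          _ = ∑ l, ∑ j, (E k l : ℝ) * ((P l j : ℝ) * θi j) := Finset.sum_comm
          _ = ∑ l, (E k l : ℝ) * φi l := by
              refine Finset.sum_congr rfl fun l _ => ?_
              rw [← Finset.mul_sum, hPθi l]
      refine ⟨d'', le_trans hd'' (Nat.le_succ d), E * P, ?_, ?_, ?_, ?_⟩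
      · rw [Matrix.det_mul, hdetE]
        rcases hdet1 with h | h <;> rw [h] <;> norm_num
      · intro i j
        calc (|(E * P) i j| : ℝ) ≤ ∑ l, (|E i l| : ℝ) * (|P l j| : ℝ) := by
              rw [Matrix.mul_apply]
              push_cast
              refine le_trans (Finset.abs_sum_le_sum_abs _ _) ?_
              refine Finset.sum_le_sum fun l _ => ?_
              rw [abs_mul]
          _ ≤ ∑ _l : Fin (d+1), M' * C := by
              refine Finset.sum_le_sum fun l _ => ?_
              exact mul_le_mul (hEent i l) (hbnd l j).1 (abs_nonneg _) (by linarith)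
          _ = ((d:ℝ)+1) * (M' * C) := by
              rw [Finset.sum_const, Finset.card_univ]
              push_cast
              simp
          _ ≤ M := by
              have hdc : ((d:ℝ)+1) * C ≤ c := by
                rw [hc]
                nlinarith [mul_nonneg (mul_nonneg (by linarith : (0:ℝ) ≤ (d:ℝ)+2) hC0.le)
                  (by nlinarith : (0:ℝ) ≤ F 1 + 2*(d:ℝ))]
              rw [hM]
              calc ((d:ℝ)+1) * (M' * C) = (((d:ℝ)+1) * C) * M' := by ring
                _ ≤ c * M' := mul_le_mul_of_nonneg_right hdc (by linarith)
      · intro i hi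
        rw [hLrow i]
        rcases Nat.lt_or_ge (i : ℕ) d with h | h
        · have hieq : i = Fin.castSucc ⟨(i:ℕ), h⟩ := by
            apply Fin.ext
            simp
          obtain ⟨k, hk⟩ := hint' ⟨(i:ℕ), h⟩ hi
          refine ⟨k, ?_⟩
          have hsumeq : ∑ t : Fin d, (E (Fin.castSucc ⟨(i:ℕ), h⟩) t.succ : ℝ) * φi t.succ
              = ∑ t : Fin d, (L' ⟨(i:ℕ), h⟩ t : ℝ) * ψi t :=
            Finset.sum_congr rfl fun t _ => by rw [hEcastS _ t, hφiS t]
          rw [hieq, Fin.sum_univ_succ, hsumeq]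
          rw [hEcast0, ← hk]
          push_cast
          ring
        · have hieq : i = Fin.last d := by
            apply Fin.ext
            have := i.isLt
            simp
            omega
          refine ⟨0, ?_⟩
          have hsumeq : ∑ t : Fin d, (E (Fin.last d) t.succ : ℝ) * φi t.succ
              = ∑ t : Fin d, (0:ℝ) * φi t.succ :=
            Finset.sum_congr rfl fun t _ => by rw [hElastS t]; norm_num
          rw [hieq, Fin.sum_univ_succ, hsumeq, hElast0, hφi0]
          simp
      · have hfun : (fun i' : Fin d'' =>
            ∑ j, (((E * P) (Fin.castLE (le_trans hd'' (Nat.le_succ d)) i') j : ℤ) : ℝ) * θi j)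
            = (fun i' : Fin d'' => ∑ t, (L' (Fin.castLE hd'' i') t : ℝ) * ψi t) := by
          funext i'
          rw [hLrow]
          have hieq : Fin.castLE (le_trans hd'' (Nat.le_succ d)) i'
              = Fin.castSucc (Fin.castLE hd'' i') := by
            apply Fin.ext
            simp
          have hsumeq : ∑ t : Fin d, (E (Fin.castSucc (Fin.castLE hd'' i')) t.succ : ℝ) * φi t.succ
              = ∑ t : Fin d, (L' (Fin.castLE hd'' i') t : ℝ) * ψi t :=
            Finset.sum_congr rfl fun t _ => by rw [hEcastS _ t, hφiS t]
          rw [hieq, Fin.sum_univ_succ, hsumeq, hEcast0, hφi0]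
          push_cast
          ring
        rw [hfun]
        have hFM : F M = F₂ M' := by rw [hM, hF₂def]
        rw [hFM]
        exact hirr'



theorem torus_decomposition' (d : ℕ) : TorusClaim d := by
  induction d with
  | zero => exact torusClaim_zero
  | succ d ih => exact torusClaim_succ d ih

theorem torus_decomposition (d : ℕ) (F : ℝ → ℝ) (hF : Growth F) :
    ∃ M₀ : ℝ, ∀ (θ : Fin d → ℝ) (N : ℕ), 0 < N →
      ∃ (M : ℝ) (θs θr θi : Fin d → ℝ), 0 < M ∧ M ≤ M₀ ∧
        (∀ i, θ i = θs i + θr i + θi i) ∧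
        torusDist θs 0 ≤ M / N ∧
        (∃ q : ℕ, 0 < q ∧ (q : ℝ) ≤ M ∧ ∀ i, ∃ k : ℤ, (q : ℝ) * θr i = k) ∧
        (∃ (d' : ℕ) (hd' : d' ≤ d) (L : Matrix (Fin d) (Fin d) ℤ),
          L.det = 1 ∧ (∀ i j, (|L i j| : ℝ) ≤ M) ∧
          (∀ i : Fin d, d' ≤ (i : ℕ) → ∃ k : ℤ, (∑ j, (L i j : ℝ) * θi j) = k) ∧
          IsIrrational1 d' (F M) N
            (fun i' : Fin d' => ∑ j, (L (Fin.castLE hd' i') j : ℝ) * θi j)) := by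
  exact torus_decomposition' d F hF
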